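/- Slepian-Wolf-minus-D region (single-letter form of Theorem 4): let Y1, Y2 be finitely-valued random variables and set X = (Y1,Y2). Then real numbers (R1,R2,D) admit finitely-valued auxiliary random variables U1, U2, Q jointly distributed with (Y1,Y2) — with Q independent of (Y1,Y2), U1 conditionally independent of (Y2,U2) given (Y1,Q), and U2 conditionally independent of (Y1,U1) given (Y2,Q) — satisfying R1 ≥ I(Y1;U1|X,Q) + H(X|U2,Q) − D, R2 ≥ I(Y2;U2|X,Q) + H(X|U1,Q) − D, R1+R2 ≥ I(U1;Y1|X,Q) + I(U2;Y2|X,Q) + H(X) − D, and D ≥ H(X|U1,U2,Q), if and only if R1 ≥ H(Y1|Y2) − D, R2 ≥ H(Y2|Y1) − D, R1+R2 ≥ H(Y1,Y2) − D, and D ≥ 0. -/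

import Mathlib

open scoped BigOperators Classical
set_option linter.unusedSectionVars false
set_option maxHeartbeats 1000000

noncomputable section

/-- Probability that the random variable `A` takes the value `a` under the pmf `p`. -/
def pr {Ω α : Type*} [Fintype Ω] (p : Ω → ℝ) (A : Ω → α) (a : α) : ℝ :=
  ∑ ω, if A ω = a then p ω else 0

/-- Shannon entropy (base 2) of the random variable `A` under the pmf `p`. -/
def ent {Ω α : Type*} [Fintype Ω] [Fintype α] (p : Ω → ℝ) (A : Ω → α) : ℝ :=
  -∑ a, pr p A a * Real.logb 2 (pr p A a)

/-- Conditional Shannon entropy `H(A | B)` (base 2). -/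
def condEnt {Ω α β : Type*} [Fintype Ω] [Fintype α] [Fintype β]
    (p : Ω → ℝ) (A : Ω → α) (B : Ω → β) : ℝ :=
  ent p (fun ω => (A ω, B ω)) - ent p B

/-- Mutual information `I(A ; B)` (base 2). -/
def mutInfo {Ω α β : Type*} [Fintype Ω] [Fintype α] [Fintype β]
    (p : Ω → ℝ) (A : Ω → α) (B : Ω → β) : ℝ :=
  ent p A + ent p B - ent p (fun ω => (A ω, B ω))

/-- Conditional mutual information `I(A ; B | C)` (base 2). -/
def condMutInfo {Ω α β γ : Type*} [Fintype Ω] [Fintype α] [Fintype β] [Fintype γ]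
    (p : Ω → ℝ) (A : Ω → α) (B : Ω → β) (C : Ω → γ) : ℝ :=
  ent p (fun ω => (A ω, C ω)) + ent p (fun ω => (B ω, C ω))
    - ent p (fun ω => (A ω, B ω, C ω)) - ent p C

/-- `p` is a probability mass function on the finite type `Ω`. -/
def IsPmf {Ω : Type*} [Fintype Ω] (p : Ω → ℝ) : Prop :=
  (∀ ω, 0 ≤ p ω) ∧ (∑ ω, p ω) = 1

/-- `k` is a transition kernel: each `k q y` is a pmf on `U`. -/
def IsKernel {Q Y U : Type*} [Fintype U] (k : Q → Y → U → ℝ) : Prop :=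
  (∀ q y u, 0 ≤ k q y u) ∧ ∀ q y, (∑ u, k q y u) = 1

/-- Independence of the random variables `A` and `B` under `p`. -/
def Indep {Ω α β : Type*} [Fintype Ω] (p : Ω → ℝ) (A : Ω → α) (B : Ω → β) : Prop :=
  ∀ a b, pr p (fun ω => (A ω, B ω)) (a, b) = pr p A a * pr p B b

/-- Conditional independence of `A` and `B` given `C` under `p`
(stated in a division-free form). -/
def CondIndep {Ω α β γ : Type*} [Fintype Ω] (p : Ω → ℝ) (A : Ω → α) (B : Ω → β)
    (C : Ω → γ) : Prop :=
  ∀ a b c, pr p (fun ω => (A ω, B ω, C ω)) (a, b, c) * pr p C c =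
    pr p (fun ω => (A ω, C ω)) (a, c) * pr p (fun ω => (B ω, C ω)) (b, c)

/-- The joint pmf `p(q) p(y1,y2) p(u1|y1,q) p(u2|y2,q)` on `Q × Y1 × Y2 × U1 × U2`. -/
def jointW {Y1 Y2 Q U1 U2 : Type*} (src : Y1 × Y2 → ℝ) (pq : Q → ℝ)
    (k1 : Q → Y1 → U1 → ℝ) (k2 : Q → Y2 → U2 → ℝ) : Q × Y1 × Y2 × U1 × U2 → ℝ :=
  fun z => pq z.1 * src (z.2.1, z.2.2.1) * k1 z.1 z.2.1 z.2.2.2.1 * k2 z.1 z.2.2.1 z.2.2.2.2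

/-- The joint pmf `p(q) p(x,y1,y2) p(u1|y1,q) p(u2|y2,q)` on `Q × X × Y1 × Y2 × U1 × U2`. -/
def ceoJoint {X Y1 Y2 Q U1 U2 : Type*} (src : X × Y1 × Y2 → ℝ) (pq : Q → ℝ)
    (k1 : Q → Y1 → U1 → ℝ) (k2 : Q → Y2 → U2 → ℝ) : Q × X × Y1 × Y2 × U1 × U2 → ℝ :=
  fun z => pq z.1 * src (z.2.1, z.2.2.1, z.2.2.2.1) *
    k1 z.1 z.2.2.1 z.2.2.2.2.1 * k2 z.1 z.2.2.2.1 z.2.2.2.2.2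

/-- Pmf of `n` i.i.d. copies of a pair source. -/
def iidPmf {Y1 Y2 : Type*} (src : Y1 × Y2 → ℝ) (n : ℕ) :
    (Fin n → Y1) × (Fin n → Y2) → ℝ :=
  fun y => ∏ j, src (y.1 j, y.2 j)

/-- Pmf of `n` i.i.d. copies of a triple source. -/
def ceoIidPmf {X Y1 Y2 : Type*} (src : X × Y1 × Y2 → ℝ) (n : ℕ) :
    (Fin n → X) × (Fin n → Y1) × (Fin n → Y2) → ℝ :=
  fun z => ∏ j, src (z.1 j, z.2.1 j, z.2.2 j)



section lemmas
variable {Ω α β γ : Type*} [Fintype Ω] [Fintype α] [Fintype β] [Fintype γ]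
  (p : Ω → ℝ)

lemma pr_nonneg (hp : ∀ ω, 0 ≤ p ω) (A : Ω → α) (a : α) : 0 ≤ pr p A a :=
  Finset.sum_nonneg fun ω _ => by split <;> [exact hp ω; exact le_rfl]

lemma sum_pr_mul (A : Ω → α) (g : α → ℝ) :
    ∑ a, pr p A a * g a = ∑ ω, p ω * g (A ω) := by
  unfold pr
  simp only [Finset.sum_mul]
  rw [Finset.sum_comm]
  refine Finset.sum_congr rfl fun ω _ => ?_
  rw [Finset.sum_congr rfl (fun a _ => ite_mul (A ω = a) (p ω) 0 (g a))]
  simp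

lemma ent_apply (A : Ω → α) :
    ent p A = -∑ ω, p ω * Real.logb 2 (pr p A (A ω)) := by
  rw [ent, sum_pr_mul]

lemma pr_mono (hp : ∀ ω, 0 ≤ p ω) {M : Ω → α} {N : Ω → β} {m : α} {n : β}
    (h : ∀ ω, M ω = m → N ω = n) : pr p M m ≤ pr p N n := by
  refine Finset.sum_le_sum fun ω _ => ?_
  by_cases hM : M ω = m
  · simp [hM, h ω hM]
  · simp [hM]; split <;> [exact hp ω; exact le_rfl]

lemma le_pr_self (hp : ∀ ω, 0 ≤ p ω) (M : Ω → α) (ω : Ω) : p ω ≤ pr p M (M ω) := by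
  have := Finset.single_le_sum (f := fun ω' => if M ω' = M ω then p ω' else 0)
    (fun i _ => by split <;> [exact hp i; exact le_rfl]) (Finset.mem_univ ω)
  simpa [pr] using this

lemma marg_fst (A : Ω → α) (B : Ω → β) (b : β) :
    ∑ a, pr p (fun ω => (A ω, B ω)) (a, b) = pr p B b := by
  unfold pr
  rw [Finset.sum_comm]
  refine Finset.sum_congr rfl fun ω _ => ?_
  simp only [Prod.mk.injEq, ite_and]
  simp

lemma sum_pr_eq (A : Ω → α) : ∑ a, pr p A a = ∑ ω, p ω := by
  have := sum_pr_mul p A (fun _ => 1)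
  simpa using this

end lemmas

section lemmas2
variable {Ω α β γ : Type*} [Fintype Ω] [Fintype α] [Fintype β] [Fintype γ]
  (p : Ω → ℝ)

lemma ent_congr {Ω' : Type*} [Fintype Ω'] {q : Ω' → ℝ} {A : Ω → α} {B : Ω' → α}
    (h : ∀ a, pr p A a = pr q B a) : ent p A = ent q B := by
  unfold ent; simp_rw [h]

lemma ent_comp_inj {δ : Type*} [Fintype δ] (A : Ω → α) {e : α → δ}
    (he : Function.Injective e) : ent p (fun ω => e (A ω)) = ent p A := by
  have hpr : ∀ a, pr p (fun ω => e (A ω)) (e a) = pr p A a := by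
    intro a; unfold pr
    refine Finset.sum_congr rfl fun ω _ => by simp [he.eq_iff]
  have hz : ∀ d, d ∉ Finset.image e Finset.univ → pr p (fun ω => e (A ω)) d = 0 := by
    intro d hd
    refine Finset.sum_eq_zero fun ω _ => ?_
    have : e (A ω) ≠ d := fun h => hd (by simp [← h])
    simp [this]
  unfold ent
  rw [← Finset.sum_subset (Finset.subset_univ (Finset.image e Finset.univ))
    (fun d _ hd => by rw [hz d hd]; simp)]
  rw [Finset.sum_image (fun a _ b _ h => he h)]
  simp_rw [hpr]

-- key pointwise facts
lemma logb_le_logb' {x y : ℝ} (hx : 0 < x) (hxy : x ≤ y) :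
    Real.logb 2 x ≤ Real.logb 2 y :=
  Real.logb_le_logb_of_le one_lt_two hx hxy

lemma ent_pair_right_le (hp : ∀ ω, 0 ≤ p ω) (A : Ω → α) (B : Ω → β) :
    ent p B ≤ ent p (fun ω => (A ω, B ω)) := by
  rw [ent_apply, ent_apply, neg_le_neg_iff]
  refine Finset.sum_le_sum fun ω _ => ?_
  rcases eq_or_lt_of_le (hp ω) with h0 | h0
  · simp [← h0]
  · refine mul_le_mul_of_nonneg_left (logb_le_logb' ?_ ?_) (hp ω)
    · exact lt_of_lt_of_le h0 (le_pr_self p hp _ ω)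
    · exact pr_mono p hp fun ω' h => by rw [Prod.mk.injEq] at h; exact h.2

lemma ent_pair_left_le (hp : ∀ ω, 0 ≤ p ω) (A : Ω → α) (B : Ω → β) :
    ent p A ≤ ent p (fun ω => (A ω, B ω)) := by
  have hs : ent p (fun ω => (A ω, B ω)) = ent p (fun ω => (B ω, A ω)) := by
    have := ent_comp_inj p (fun ω => (B ω, A ω)) (e := Prod.swap)
      Prod.swap_injective
    simpa using this
  rw [hs]; exact ent_pair_right_le p hp B A

end lemmas2

section lemmas3
variable {Ω α β γ : Type*} [Fintype Ω] [Fintype α] [Fintype β] [Fintype γ]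
  (p : Ω → ℝ)

lemma sum_rotate (F : α → β → γ → ℝ) :
    ∑ a, ∑ b, ∑ c, F a b c = ∑ c, ∑ a, ∑ b, F a b c :=
  calc ∑ a, ∑ b, ∑ c, F a b c = ∑ a, ∑ c, ∑ b, F a b c :=
      Finset.sum_congr rfl fun a _ => Finset.sum_comm
    _ = ∑ c, ∑ a, ∑ b, F a b c := Finset.sum_comm

lemma condMutInfo_nonneg' (hp0 : ∀ ω, 0 ≤ p ω) (hp1 : ∑ ω, p ω = 1)
    (A : Ω → α) (B : Ω → β) (C : Ω → γ) :
    0 ≤ ent p (fun ω => (A ω, C ω)) + ent p (fun ω => (B ω, C ω))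
      - ent p (fun ω => (A ω, B ω, C ω)) - ent p C := by
  classical
  set T : Ω → α × β × γ := fun ω => (A ω, B ω, C ω) with hT
  set AC : Ω → α × γ := fun ω => (A ω, C ω) with hAC
  set BC : Ω → β × γ := fun ω => (B ω, C ω) with hBC
  have hlog2 : (0:ℝ) < Real.log 2 := Real.log_pos one_lt_two
  set x : Ω → ℝ := fun ω =>
    pr p AC (AC ω) * pr p BC (BC ω) / (pr p T (T ω) * pr p C (C ω)) with hx
  have key : ent p AC + ent p BC - ent p T - ent p C =
      ∑ ω, (p ω * Real.logb 2 (pr p T (T ω)) + p ω * Real.logb 2 (pr p C (C ω))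
        - p ω * Real.logb 2 (pr p AC (AC ω)) - p ω * Real.logb 2 (pr p BC (BC ω))) := by
    rw [ent_apply p AC, ent_apply p BC, ent_apply p T, ent_apply p C,
      Finset.sum_sub_distrib, Finset.sum_sub_distrib, Finset.sum_add_distrib]
    ring
  rw [key]
  have hb : ∀ ω, p ω * (1 - x ω) / Real.log 2 ≤
      p ω * Real.logb 2 (pr p T (T ω)) + p ω * Real.logb 2 (pr p C (C ω))
        - p ω * Real.logb 2 (pr p AC (AC ω)) - p ω * Real.logb 2 (pr p BC (BC ω)) := by
    intro ω
    rcases eq_or_lt_of_le (hp0 ω) with h0 | h0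
    · rw [← h0]; simp
    · have hTpos : 0 < pr p T (T ω) := lt_of_lt_of_le h0 (le_pr_self p hp0 T ω)
      have hCpos : 0 < pr p C (C ω) :=
        lt_of_lt_of_le hTpos (pr_mono p hp0 fun ω' h => by
          simp only [hT, Prod.ext_iff] at h; exact h.2.2)
      have hACpos : 0 < pr p AC (AC ω) :=
        lt_of_lt_of_le hTpos (pr_mono p hp0 fun ω' h => by
          simp only [hT, hAC, Prod.ext_iff] at h ⊢; exact ⟨h.1, h.2.2⟩)
      have hBCpos : 0 < pr p BC (BC ω) :=
        lt_of_lt_of_le hTpos (pr_mono p hp0 fun ω' h => by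
          simp only [hT, hBC, Prod.ext_iff] at h ⊢; exact ⟨h.2.1, h.2.2⟩)
      have hxpos : 0 < x ω := by rw [hx]; positivity
      have hlogx : Real.logb 2 (x ω) ≤ (x ω - 1) / Real.log 2 := by
        rw [Real.logb, div_le_div_iff_of_pos_right hlog2]
        exact Real.log_le_sub_one_of_pos hxpos
      have hsplit : Real.logb 2 (pr p T (T ω)) + Real.logb 2 (pr p C (C ω))
          - Real.logb 2 (pr p AC (AC ω)) - Real.logb 2 (pr p BC (BC ω))
          = - Real.logb 2 (x ω) := by
        rw [hx]
        rw [Real.logb_div (by positivity) (by positivity),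
          Real.logb_mul hACpos.ne' hBCpos.ne', Real.logb_mul hTpos.ne' hCpos.ne']
        ring
      have hneg : (1 - x ω) / Real.log 2 ≤ - Real.logb 2 (x ω) := by
        have h' : (1 - x ω) / Real.log 2 = -((x ω - 1) / Real.log 2) := by ring
        rw [h']
        linarith [hlogx]
      calc p ω * (1 - x ω) / Real.log 2 = p ω * ((1 - x ω) / Real.log 2) := by ring
        _ ≤ p ω * (- Real.logb 2 (x ω)) := mul_le_mul_of_nonneg_left hneg (hp0 ω)
        _ = p ω * (Real.logb 2 (pr p T (T ω)) + Real.logb 2 (pr p C (C ω))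
            - Real.logb 2 (pr p AC (AC ω)) - Real.logb 2 (pr p BC (BC ω))) := by
            rw [hsplit]
        _ = _ := by ring
  have hxsum : ∑ ω, p ω * x ω ≤ 1 := by
    have h1 : ∑ ω, p ω * x ω = ∑ t : α × β × γ, pr p T t *
        (pr p AC (t.1, t.2.2) * pr p BC (t.2.1, t.2.2) / (pr p T t * pr p C t.2.2)) :=
      (sum_pr_mul p T (fun t => pr p AC (t.1, t.2.2) * pr p BC (t.2.1, t.2.2) /
        (pr p T t * pr p C t.2.2))).symm
    have h2 : ∀ t : α × β × γ, pr p T t *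
        (pr p AC (t.1, t.2.2) * pr p BC (t.2.1, t.2.2) / (pr p T t * pr p C t.2.2))
        ≤ pr p AC (t.1, t.2.2) * pr p BC (t.2.1, t.2.2) / pr p C t.2.2 := by
      intro t
      rcases eq_or_lt_of_le (pr_nonneg p hp0 T t) with h0 | h0
      · rw [← h0]
        simp only [zero_mul]
        exact div_nonneg (mul_nonneg (pr_nonneg p hp0 _ _) (pr_nonneg p hp0 _ _))
          (pr_nonneg p hp0 _ _)
      · have hC : 0 < pr p C t.2.2 :=
          lt_of_lt_of_le h0 (pr_mono p hp0 fun ω' h => by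
            simp only [hT, Prod.ext_iff] at h; exact h.2.2)
        have : pr p T t * (pr p AC (t.1, t.2.2) * pr p BC (t.2.1, t.2.2)
            / (pr p T t * pr p C t.2.2)) =
            pr p AC (t.1, t.2.2) * pr p BC (t.2.1, t.2.2) / pr p C t.2.2 := by
          field_simp
        exact le_of_eq this
    have h3 : ∑ t : α × β × γ,
        pr p AC (t.1, t.2.2) * pr p BC (t.2.1, t.2.2) / pr p C t.2.2 ≤ 1 := by
      have e1 : ∑ t : α × β × γ,
          pr p AC (t.1, t.2.2) * pr p BC (t.2.1, t.2.2) / pr p C t.2.2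
          = ∑ c, (∑ a, pr p AC (a, c)) * (∑ b, pr p BC (b, c)) / pr p C c := by
        rw [Fintype.sum_prod_type]
        simp_rw [Fintype.sum_prod_type]
        rw [sum_rotate]
        refine Finset.sum_congr rfl fun c _ => ?_
        rw [Finset.sum_mul_sum, Finset.sum_div]
        exact Finset.sum_congr rfl fun a _ => by rw [Finset.sum_div]
      rw [e1]
      have e2 : ∀ c, (∑ a, pr p AC (a, c)) * (∑ b, pr p BC (b, c)) / pr p C c
          ≤ pr p C c := by
        intro c
        rw [marg_fst p A C c, marg_fst p B C c]
        rcases eq_or_lt_of_le (pr_nonneg p hp0 C c) with h0 | h0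
        · rw [← h0]; simp
        · rw [div_le_iff₀ h0]
      calc _ ≤ ∑ c, pr p C c := Finset.sum_le_sum fun c _ => e2 c
        _ = ∑ ω, p ω := sum_pr_eq p C
        _ = 1 := hp1
    calc ∑ ω, p ω * x ω
        = ∑ t : α × β × γ, pr p T t * (pr p AC (t.1, t.2.2) * pr p BC (t.2.1, t.2.2)
            / (pr p T t * pr p C t.2.2)) := h1
      _ ≤ ∑ t : α × β × γ,
          pr p AC (t.1, t.2.2) * pr p BC (t.2.1, t.2.2) / pr p C t.2.2 :=
          Finset.sum_le_sum fun t _ => h2 t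
      _ ≤ 1 := h3
  calc (0:ℝ) ≤ (∑ ω, p ω * (1 - x ω)) / Real.log 2 := by
        apply div_nonneg _ hlog2.le
        have e : ∑ ω, p ω * (1 - x ω) = 1 - ∑ ω, p ω * x ω := by
          simp_rw [mul_sub, mul_one]
          rw [Finset.sum_sub_distrib, hp1]
        rw [e]; linarith
    _ = ∑ ω, p ω * (1 - x ω) / Real.log 2 := by
        rw [← Finset.sum_div]
    _ ≤ _ := Finset.sum_le_sum fun ω _ => hb ω

lemma condIndep_ent' (hp0 : ∀ ω, 0 ≤ p ω)
    (A : Ω → α) (B : Ω → β) (C : Ω → γ)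
    (h : ∀ a b c, pr p (fun ω => (A ω, B ω, C ω)) (a, b, c) * pr p C c =
      pr p (fun ω => (A ω, C ω)) (a, c) * pr p (fun ω => (B ω, C ω)) (b, c)) :
    ent p (fun ω => (A ω, B ω, C ω)) + ent p C =
      ent p (fun ω => (A ω, C ω)) + ent p (fun ω => (B ω, C ω)) := by
  classical
  set T : Ω → α × β × γ := fun ω => (A ω, B ω, C ω) with hT
  set AC : Ω → α × γ := fun ω => (A ω, C ω) with hAC
  set BC : Ω → β × γ := fun ω => (B ω, C ω) with hBC
  rw [ent_apply p AC, ent_apply p BC, ent_apply p T, ent_apply p C,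
    ← neg_add, ← neg_add, ← Finset.sum_add_distrib, ← Finset.sum_add_distrib]
  refine congrArg Neg.neg (Finset.sum_congr rfl fun ω _ => ?_)
  rcases eq_or_lt_of_le (hp0 ω) with h0 | h0
  · rw [← h0]; ring
  · have hTpos : 0 < pr p T (T ω) := lt_of_lt_of_le h0 (le_pr_self p hp0 T ω)
    have hCpos : 0 < pr p C (C ω) :=
      lt_of_lt_of_le hTpos (pr_mono p hp0 fun ω' hh => by
        simp only [hT, Prod.ext_iff] at hh; exact hh.2.2)
    have hACpos : 0 < pr p AC (AC ω) :=
      lt_of_lt_of_le hTpos (pr_mono p hp0 fun ω' hh => by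
        simp only [hT, hAC, Prod.ext_iff] at hh ⊢; exact ⟨hh.1, hh.2.2⟩)
    have hBCpos : 0 < pr p BC (BC ω) :=
      lt_of_lt_of_le hTpos (pr_mono p hp0 fun ω' hh => by
        simp only [hT, hBC, Prod.ext_iff] at hh ⊢; exact ⟨hh.2.1, hh.2.2⟩)
    have hiden : pr p T (T ω) * pr p C (C ω) = pr p AC (AC ω) * pr p BC (BC ω) :=
      h (A ω) (B ω) (C ω)
    have hlogs : Real.logb 2 (pr p T (T ω)) + Real.logb 2 (pr p C (C ω))
        = Real.logb 2 (pr p AC (AC ω)) + Real.logb 2 (pr p BC (BC ω)) := by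
      rw [← Real.logb_mul hTpos.ne' hCpos.ne', ← Real.logb_mul hACpos.ne' hBCpos.ne',
        hiden]
    calc p ω * Real.logb 2 (pr p T (T ω)) + p ω * Real.logb 2 (pr p C (C ω))
        = p ω * (Real.logb 2 (pr p T (T ω)) + Real.logb 2 (pr p C (C ω))) := by ring
      _ = p ω * (Real.logb 2 (pr p AC (AC ω)) + Real.logb 2 (pr p BC (BC ω))) := by
          rw [hlogs]
      _ = _ := by ring

end lemmas3

section joint
variable {Y1 Y2 Q U1 U2 : Type*} [Fintype Y1] [Fintype Y2] [Fintype Q]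
  [Fintype U1] [Fintype U2]
  (src : Y1 × Y2 → ℝ) (pq : Q → ℝ) (k1 : Q → Y1 → U1 → ℝ) (k2 : Q → Y2 → U2 → ℝ)

lemma jw_nonneg (hsrc0 : ∀ y, 0 ≤ src y) (hq0 : ∀ q, 0 ≤ pq q)
    (hk10 : ∀ q y u, 0 ≤ k1 q y u) (hk20 : ∀ q y u, 0 ≤ k2 q y u)
    (z : Q × Y1 × Y2 × U1 × U2) : 0 ≤ jointW src pq k1 k2 z := by
  unfold jointW
  have := hsrc0 (z.2.1, z.2.2.1); have := hq0 z.1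
  have := hk10 z.1 z.2.1 z.2.2.2.1; have := hk20 z.1 z.2.2.1 z.2.2.2.2
  positivity

lemma jw_sum_one (hsrc1 : ∑ y, src y = 1) (hq1 : ∑ q, pq q = 1)
    (hk11 : ∀ q y, ∑ u, k1 q y u = 1) (hk21 : ∀ q y, ∑ u, k2 q y u = 1) :
    ∑ z, jointW src pq k1 k2 z = 1 := by
  unfold jointW
  simp only [Fintype.sum_prod_type]
  simp only [← Finset.mul_sum, hk21, hk11, mul_one]
  rw [← Fintype.sum_prod_type (f := src), hsrc1]
  simp [hq1]

lemma jw_T1 (hk11 : ∀ q y, ∑ u, k1 q y u = 1) (y1 : Y1) (u2 : U2) (q : Q) (y2 : Y2) :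
    pr (jointW src pq k1 k2) (fun z => (z.2.1, (z.2.2.2.2, z.1), z.2.2.1))
      (y1, (u2, q), y2) = pq q * src (y1, y2) * k2 q y2 u2 := by
  unfold pr jointW
  simp only [Fintype.sum_prod_type, Prod.mk.injEq, ite_and]
  simp [Fintype.sum_ite_eq, Fintype.sum_ite_eq', ← Finset.mul_sum, ← Finset.sum_mul,
    hk11]

lemma jw_P1 (hk11 : ∀ q y, ∑ u, k1 q y u = 1) (u2 : U2) (q : Q) (y2 : Y2) :
    pr (jointW src pq k1 k2) (fun z => ((z.2.2.2.2, z.1), z.2.2.1))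
      ((u2, q), y2) = pq q * (∑ y1, src (y1, y2)) * k2 q y2 u2 := by
  unfold pr jointW
  simp only [Fintype.sum_prod_type, Prod.mk.injEq, ite_and]
  simp [Fintype.sum_ite_eq, Fintype.sum_ite_eq', ← Finset.mul_sum, ← Finset.sum_mul,
    hk11, Finset.sum_mul, Finset.mul_sum]
  refine Finset.sum_congr rfl fun x _ => ?_
  rw [← Finset.sum_mul, ← Finset.mul_sum, hk11, mul_one]

lemma jw_T2 (hk21 : ∀ q y, ∑ u, k2 q y u = 1) (y2 : Y2) (u1 : U1) (q : Q) (y1 : Y1) :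
    pr (jointW src pq k1 k2) (fun z => (z.2.2.1, (z.2.2.2.1, z.1), z.2.1))
      (y2, (u1, q), y1) = pq q * src (y1, y2) * k1 q y1 u1 := by
  unfold pr jointW
  simp only [Fintype.sum_prod_type, Prod.mk.injEq, ite_and]
  simp [Fintype.sum_ite_eq, Fintype.sum_ite_eq', ← Finset.mul_sum, ← Finset.sum_mul,
    hk21]

lemma jw_P2 (hk21 : ∀ q y, ∑ u, k2 q y u = 1) (u1 : U1) (q : Q) (y1 : Y1) :
    pr (jointW src pq k1 k2) (fun z => ((z.2.2.2.1, z.1), z.2.1))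
      ((u1, q), y1) = pq q * (∑ y2, src (y1, y2)) * k1 q y1 u1 := by
  unfold pr jointW
  simp only [Fintype.sum_prod_type, Prod.mk.injEq, ite_and]
  simp [Fintype.sum_ite_eq, Fintype.sum_ite_eq', ← Finset.mul_sum, ← Finset.sum_mul,
    hk21]

lemma jw_marg_y1y2 (hq1 : ∑ q, pq q = 1) (hk11 : ∀ q y, ∑ u, k1 q y u = 1)
    (hk21 : ∀ q y, ∑ u, k2 q y u = 1) (y : Y1 × Y2) :
    pr (jointW src pq k1 k2) (fun z => (z.2.1, z.2.2.1)) y = src y := by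
  obtain ⟨y1, y2⟩ := y
  unfold pr jointW
  simp only [Fintype.sum_prod_type, Prod.mk.injEq, ite_and]
  simp [Fintype.sum_ite_eq, Fintype.sum_ite_eq', ← Finset.mul_sum, ← Finset.sum_mul,
    hk11, hk21, hq1]

lemma jw_marg_y2 (hq1 : ∑ q, pq q = 1) (hk11 : ∀ q y, ∑ u, k1 q y u = 1)
    (hk21 : ∀ q y, ∑ u, k2 q y u = 1) (y2 : Y2) :
    pr (jointW src pq k1 k2) (fun z => z.2.2.1) y2 = ∑ y1, src (y1, y2) := by
  unfold pr jointW
  simp only [Fintype.sum_prod_type, Prod.mk.injEq, ite_and]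
  simp [Fintype.sum_ite_eq, Fintype.sum_ite_eq', ← Finset.mul_sum, ← Finset.sum_mul,
    hk11, hk21, hq1]

lemma jw_marg_y1 (hq1 : ∑ q, pq q = 1) (hk11 : ∀ q y, ∑ u, k1 q y u = 1)
    (hk21 : ∀ q y, ∑ u, k2 q y u = 1) (y1 : Y1) :
    pr (jointW src pq k1 k2) (fun z => z.2.1) y1 = ∑ y2, src (y1, y2) := by
  unfold pr jointW
  simp only [Fintype.sum_prod_type, Prod.mk.injEq, ite_and]
  simp [Fintype.sum_ite_eq, Fintype.sum_ite_eq', ← Finset.mul_sum, ← Finset.sum_mul,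
    hk11, hk21, hq1]

lemma src_pr_id (y : Y1 × Y2) : pr src id y = src y := by
  unfold pr
  simp only [id_eq]
  rw [Fintype.sum_prod_type]
  obtain ⟨a, b⟩ := y
  simp [Prod.ext_iff, ite_and, Fintype.sum_ite_eq, Fintype.sum_ite_eq']

lemma src_pr_snd (y2 : Y2) : pr src Prod.snd y2 = ∑ y1, src (y1, y2) := by
  unfold pr
  rw [Fintype.sum_prod_type]
  simp [Fintype.sum_ite_eq, Fintype.sum_ite_eq']

lemma src_pr_fst (y1 : Y1) : pr src Prod.fst y1 = ∑ y2, src (y1, y2) := by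
  unfold pr
  rw [Fintype.sum_prod_type, Finset.sum_comm]
  simp [Fintype.sum_ite_eq, Fintype.sum_ite_eq']

end joint

section det
variable {Y1 Y2 : Type} [Fintype Y1] [Fintype Y2] (src : Y1 × Y2 → ℝ)
  {n1 n2 : ℕ} (e1 : Y1 ≃ Fin n1) (e2 : Y2 ≃ Fin n2)

lemma det_pr {α : Type*} (A : Fin 1 × Y1 × Y2 × Fin n1 × Fin n2 → α) (a : α) :
    pr (jointW src (fun _ => (1:ℝ)) (fun _ y u => if u = e1 y then 1 else 0)
        (fun _ y u => if u = e2 y then 1 else 0)) A a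
      = pr src (fun y => A (0, y.1, y.2, e1 y.1, e2 y.2)) a := by
  unfold pr jointW
  rw [Fintype.sum_prod_type, Fin.sum_univ_one]
  simp only [Fintype.sum_prod_type]
  simp [mul_ite, ite_mul, mul_one, mul_zero, one_mul, zero_mul,
    Fintype.sum_ite_eq, Fintype.sum_ite_eq']
  have step : ∀ (x : Y1) (x1 : Y2) (x2 : Fin n1) (x3 : Fin n2),
      (if A (0, x, x1, x2, x3) = a then
        if x3 = e2 x1 then if x2 = e1 x then src (x, x1) else 0 else 0 else 0)
      = (if x3 = e2 x1 then if x2 = e1 x then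
          (if A (0, x, x1, x2, x3) = a then src (x, x1) else 0) else 0 else 0) := by
    intros x x1 x2 x3
    split_ifs <;> rfl
  simp_rw [step]
  simp [Fintype.sum_ite_eq, Fintype.sum_ite_eq']

end det

section helpers
variable {Ω α δ : Type*} [Fintype Ω] [Fintype α] [Fintype δ] (p : Ω → ℝ)

lemma ent_comp_left_inv (A : Ω → α) (f : α → δ) (g : δ → α)
    (hg : ∀ a, g (f a) = a) : ent p (fun ω => f (A ω)) = ent p A :=
  ent_comp_inj p A (fun a b h => by rw [← hg a, h, hg b])

end helpers

section joint2
variable {Y1 Y2 Q U1 U2 : Type*} [Fintype Y1] [Fintype Y2] [Fintype Q]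
  [Fintype U1] [Fintype U2]
  (src : Y1 × Y2 → ℝ) (pq : Q → ℝ) (k1 : Q → Y1 → U1 → ℝ) (k2 : Q → Y2 → U2 → ℝ)

lemma jw_marg_y2y1 (hq1 : ∑ q, pq q = 1) (hk11 : ∀ q y, ∑ u, k1 q y u = 1)
    (hk21 : ∀ q y, ∑ u, k2 q y u = 1) (y2 : Y2) (y1 : Y1) :
    pr (jointW src pq k1 k2) (fun z => (z.2.2.1, z.2.1)) (y2, y1) = src (y1, y2) := by
  unfold pr jointW
  simp only [Fintype.sum_prod_type, Prod.mk.injEq, ite_and]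
  simp [Fintype.sum_ite_eq, Fintype.sum_ite_eq', ← Finset.mul_sum, ← Finset.sum_mul,
    hk11, hk21, hq1]

end joint2

/-- **Slepian–Wolf-minus-`D` region** (single-letter form of Theorem 4): with
`X = (Y1,Y2)`, the single-letter CEO outer-bound inequalities admit auxiliary random
variables `U1, U2, Q` (with the stated independence structure) iff
`R1 ≥ H(Y1|Y2) − D`, `R2 ≥ H(Y2|Y1) − D`, `R1+R2 ≥ H(Y1,Y2) − D` and `D ≥ 0`. -/
theorem slepian_wolf_minus_D {Y1 Y2 : Type} [Fintype Y1] [Fintype Y2]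
    (src : Y1 × Y2 → ℝ) (hsrc : IsPmf src) (R1 R2 D : ℝ) :
    (∃ (n1 n2 nq : ℕ) (pq : Fin nq → ℝ)
        (k1 : Fin nq → Y1 → Fin n1 → ℝ) (k2 : Fin nq → Y2 → Fin n2 → ℝ),
      (∀ q, 0 ≤ pq q) ∧ (∑ q, pq q) = 1 ∧ IsKernel k1 ∧ IsKernel k2 ∧
      R1 ≥ condMutInfo (jointW src pq k1 k2) (fun z => z.2.1) (fun z => z.2.2.2.1)
            (fun z => ((z.2.1, z.2.2.1), z.1)) +
          condEnt (jointW src pq k1 k2) (fun z => (z.2.1, z.2.2.1))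
            (fun z => (z.2.2.2.2, z.1)) - D ∧
      R2 ≥ condMutInfo (jointW src pq k1 k2) (fun z => z.2.2.1) (fun z => z.2.2.2.2)
            (fun z => ((z.2.1, z.2.2.1), z.1)) +
          condEnt (jointW src pq k1 k2) (fun z => (z.2.1, z.2.2.1))
            (fun z => (z.2.2.2.1, z.1)) - D ∧
      R1 + R2 ≥ condMutInfo (jointW src pq k1 k2) (fun z => z.2.2.2.1) (fun z => z.2.1)
            (fun z => ((z.2.1, z.2.2.1), z.1)) +
          condMutInfo (jointW src pq k1 k2) (fun z => z.2.2.2.2) (fun z => z.2.2.1)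
            (fun z => ((z.2.1, z.2.2.1), z.1)) +
          ent (jointW src pq k1 k2) (fun z => (z.2.1, z.2.2.1)) - D ∧
      D ≥ condEnt (jointW src pq k1 k2) (fun z => (z.2.1, z.2.2.1))
            (fun z => (z.2.2.2.1, z.2.2.2.2, z.1))) ↔
    (R1 ≥ condEnt src Prod.fst Prod.snd - D ∧
     R2 ≥ condEnt src Prod.snd Prod.fst - D ∧
     R1 + R2 ≥ ent src id - D ∧
     D ≥ 0) := by
  have hsrc0 := hsrc.1
  have hsrc1 := hsrc.2
  constructor
  · rintro ⟨n1, n2, nq, pq, k1, k2, hq0, hq1, hk1, hk2, h1, h2, h12, hD⟩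
    set p := jointW src pq k1 k2 with hp
    have hp0 : ∀ z, 0 ≤ p z := jw_nonneg src pq k1 k2 hsrc0 hq0 hk1.1 hk2.1
    have hp1 : ∑ z, p z = 1 := jw_sum_one src pq k1 k2 hsrc1 hq1 hk1.2 hk2.2
    -- marginal entropies
    have eXY : ent p (fun z => (z.2.1, z.2.2.1)) = ent src id :=
      ent_congr p fun y =>
        (jw_marg_y1y2 src pq k1 k2 hq1 hk1.2 hk2.2 y).trans (src_pr_id src y).symm
    have eYX : ent p (fun z => (z.2.2.1, z.2.1)) = ent src id := by
      have h := ent_comp_left_inv p (fun z : Fin nq × Y1 × Y2 × Fin n1 × Fin n2 =>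
        (z.2.1, z.2.2.1)) (fun t => (t.2, t.1)) (fun t => (t.2, t.1)) (fun a => rfl)
      exact h.trans eXY
    have eY2 : ent p (fun z => z.2.2.1) = ent src Prod.snd :=
      ent_congr p fun y2 =>
        (jw_marg_y2 src pq k1 k2 hq1 hk1.2 hk2.2 y2).trans (src_pr_snd src y2).symm
    have eY1 : ent p (fun z => z.2.1) = ent src Prod.fst :=
      ent_congr p fun y1 =>
        (jw_marg_y1 src pq k1 k2 hq1 hk1.2 hk2.2 y1).trans (src_pr_fst src y1).symm
    have hcmi1 : 0 ≤ condMutInfo p (fun z => z.2.1) (fun z => z.2.2.2.1)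
        (fun z => ((z.2.1, z.2.2.1), z.1)) :=
      condMutInfo_nonneg' p hp0 hp1 (fun z => z.2.1) (fun z => z.2.2.2.1)
        (fun z => ((z.2.1, z.2.2.1), z.1))
    have hcmi2 : 0 ≤ condMutInfo p (fun z => z.2.2.1) (fun z => z.2.2.2.2)
        (fun z => ((z.2.1, z.2.2.1), z.1)) :=
      condMutInfo_nonneg' p hp0 hp1 (fun z => z.2.2.1) (fun z => z.2.2.2.2)
        (fun z => ((z.2.1, z.2.2.1), z.1))
    have hcmi1' : 0 ≤ condMutInfo p (fun z => z.2.2.2.1) (fun z => z.2.1)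
        (fun z => ((z.2.1, z.2.2.1), z.1)) :=
      condMutInfo_nonneg' p hp0 hp1 (fun z => z.2.2.2.1) (fun z => z.2.1)
        (fun z => ((z.2.1, z.2.2.1), z.1))
    have hcmi2' : 0 ≤ condMutInfo p (fun z => z.2.2.2.2) (fun z => z.2.2.1)
        (fun z => ((z.2.1, z.2.2.1), z.1)) :=
      condMutInfo_nonneg' p hp0 hp1 (fun z => z.2.2.2.2) (fun z => z.2.2.1)
        (fun z => ((z.2.1, z.2.2.1), z.1))
    -- conditional entropy bounds
    have key1 : ent p (fun z => ((z.2.1, z.2.2.1), (z.2.2.2.2, z.1)))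
        = ent p (fun z => (z.2.1, (z.2.2.2.2, z.1), z.2.2.1)) :=
      ent_comp_left_inv p (fun z => (z.2.1, (z.2.2.2.2, z.1), z.2.2.1))
        (fun t => ((t.1, t.2.2), t.2.1)) (fun s => (s.1.1, s.2, s.1.2)) (fun a => rfl)
    have hci1 : ent p (fun z => (z.2.1, (z.2.2.2.2, z.1), z.2.2.1))
        + ent p (fun z => z.2.2.1)
        = ent p (fun z => (z.2.1, z.2.2.1))
          + ent p (fun z => ((z.2.2.2.2, z.1), z.2.2.1)) := by
      refine condIndep_ent' p hp0 (fun z => z.2.1) (fun z => (z.2.2.2.2, z.1))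
        (fun z => z.2.2.1) ?_
      rintro a ⟨u2, q⟩ c
      rw [jw_T1 src pq k1 k2 hk1.2 a u2 q c, jw_P1 src pq k1 k2 hk1.2 u2 q c,
        jw_marg_y2 src pq k1 k2 hq1 hk1.2 hk2.2 c,
        jw_marg_y1y2 src pq k1 k2 hq1 hk1.2 hk2.2 (a, c)]
      ring
    have hmono1 : ent p (fun z => (z.2.2.2.2, z.1))
        ≤ ent p (fun z => ((z.2.2.2.2, z.1), z.2.2.1)) :=
      ent_pair_left_le p hp0 (fun z => (z.2.2.2.2, z.1)) (fun z => z.2.2.1)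
    have hce1 : condEnt src Prod.fst Prod.snd
        ≤ condEnt p (fun z => (z.2.1, z.2.2.1)) (fun z => (z.2.2.2.2, z.1)) := by
      have hid : ent src (fun ω : Y1 × Y2 => (Prod.fst ω, Prod.snd ω)) = ent src id := rfl
      unfold condEnt
      rw [hid, key1]
      linarith [hci1, hmono1, eXY, eY2]
    have key2 : ent p (fun z => ((z.2.1, z.2.2.1), (z.2.2.2.1, z.1)))
        = ent p (fun z => (z.2.2.1, (z.2.2.2.1, z.1), z.2.1)) :=
      ent_comp_left_inv p (fun z => (z.2.2.1, (z.2.2.2.1, z.1), z.2.1))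
        (fun t => ((t.2.2, t.1), t.2.1)) (fun s => (s.1.2, s.2, s.1.1)) (fun a => rfl)
    have hci2 : ent p (fun z => (z.2.2.1, (z.2.2.2.1, z.1), z.2.1))
        + ent p (fun z => z.2.1)
        = ent p (fun z => (z.2.2.1, z.2.1))
          + ent p (fun z => ((z.2.2.2.1, z.1), z.2.1)) := by
      refine condIndep_ent' p hp0 (fun z => z.2.2.1) (fun z => (z.2.2.2.1, z.1))
        (fun z => z.2.1) ?_
      rintro a ⟨u1, q⟩ c
      rw [jw_T2 src pq k1 k2 hk2.2 a u1 q c, jw_P2 src pq k1 k2 hk2.2 u1 q c,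
        jw_marg_y1 src pq k1 k2 hq1 hk1.2 hk2.2 c,
        jw_marg_y2y1 src pq k1 k2 hq1 hk1.2 hk2.2 a c]
      ring
    have hmono2 : ent p (fun z => (z.2.2.2.1, z.1))
        ≤ ent p (fun z => ((z.2.2.2.1, z.1), z.2.1)) :=
      ent_pair_left_le p hp0 (fun z => (z.2.2.2.1, z.1)) (fun z => z.2.1)
    have hce2 : condEnt src Prod.snd Prod.fst
        ≤ condEnt p (fun z => (z.2.1, z.2.2.1)) (fun z => (z.2.2.2.1, z.1)) := by
      have hsw : ent src (fun ω : Y1 × Y2 => (Prod.snd ω, Prod.fst ω)) = ent src id :=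
        ent_comp_left_inv src id (fun t => (t.2, t.1)) (fun t => (t.2, t.1))
          (fun a => rfl)
      unfold condEnt
      rw [hsw, key2]
      linarith [hci2, hmono2, eYX, eY1]
    have hceD : 0 ≤ condEnt p (fun z => (z.2.1, z.2.2.1))
        (fun z => (z.2.2.2.1, z.2.2.2.2, z.1)) := by
      unfold condEnt
      have := ent_pair_right_le p hp0 (fun z => (z.2.1, z.2.2.1))
        (fun z => (z.2.2.2.1, z.2.2.2.2, z.1))
      linarith
    refine ⟨by linarith, by linarith, by linarith, by linarith⟩
  · rintro ⟨hr1, hr2, hr12, hd0⟩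
    set e1 := Fintype.equivFin Y1 with he1
    set e2 := Fintype.equivFin Y2 with he2
    set p := jointW src (fun _ : Fin 1 => (1:ℝ))
      (fun _ y u => if u = e1 y then (1:ℝ) else 0)
      (fun _ y u => if u = e2 y then (1:ℝ) else 0) with hp
    have hent : ∀ {δ : Type}, ∀ [Fintype δ],
        ∀ (A : Fin 1 × Y1 × Y2 × Fin (Fintype.card Y1) × Fin (Fintype.card Y2) → δ),
        ent p A = ent src (fun y => A (0, y.1, y.2, e1 y.1, e2 y.2)) := by
      intro δ _ A
      exact ent_congr p fun d => det_pr src e1 e2 A d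
    have E1 : ent p (fun z => (z.2.1, ((z.2.1, z.2.2.1), z.1))) = ent src id := by
      rw [hent]
      exact ent_comp_left_inv src id
        (fun y => (y.1, ((y.1, y.2), (0 : Fin 1)))) (fun s => s.2.1) (fun a => rfl)
    have E2 : ent p (fun z => (z.2.2.2.1, ((z.2.1, z.2.2.1), z.1))) = ent src id := by
      rw [hent]
      exact ent_comp_left_inv src id
        (fun y => (e1 y.1, ((y.1, y.2), (0 : Fin 1)))) (fun s => s.2.1) (fun a => rfl)
    have E3 : ent p (fun z => (z.2.1, z.2.2.2.1, ((z.2.1, z.2.2.1), z.1)))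
        = ent src id := by
      rw [hent]
      exact ent_comp_left_inv src id
        (fun y => (y.1, e1 y.1, ((y.1, y.2), (0 : Fin 1)))) (fun s => s.2.2.1)
        (fun a => rfl)
    have E3' : ent p (fun z => (z.2.2.2.1, z.2.1, ((z.2.1, z.2.2.1), z.1)))
        = ent src id := by
      rw [hent]
      exact ent_comp_left_inv src id
        (fun y => (e1 y.1, y.1, ((y.1, y.2), (0 : Fin 1)))) (fun s => s.2.2.1)
        (fun a => rfl)
    have E4 : ent p (fun z => ((z.2.1, z.2.2.1), z.1)) = ent src id := by
      rw [hent]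
      exact ent_comp_left_inv src id
        (fun y => ((y.1, y.2), (0 : Fin 1))) (fun s => s.1) (fun a => rfl)
    have F1 : ent p (fun z => (z.2.2.1, ((z.2.1, z.2.2.1), z.1))) = ent src id := by
      rw [hent]
      exact ent_comp_left_inv src id
        (fun y => (y.2, ((y.1, y.2), (0 : Fin 1)))) (fun s => s.2.1) (fun a => rfl)
    have F2 : ent p (fun z => (z.2.2.2.2, ((z.2.1, z.2.2.1), z.1))) = ent src id := by
      rw [hent]
      exact ent_comp_left_inv src id
        (fun y => (e2 y.2, ((y.1, y.2), (0 : Fin 1)))) (fun s => s.2.1) (fun a => rfl)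
    have F3 : ent p (fun z => (z.2.2.1, z.2.2.2.2, ((z.2.1, z.2.2.1), z.1)))
        = ent src id := by
      rw [hent]
      exact ent_comp_left_inv src id
        (fun y => (y.2, e2 y.2, ((y.1, y.2), (0 : Fin 1)))) (fun s => s.2.2.1)
        (fun a => rfl)
    have F3' : ent p (fun z => (z.2.2.2.2, z.2.2.1, ((z.2.1, z.2.2.1), z.1)))
        = ent src id := by
      rw [hent]
      exact ent_comp_left_inv src id
        (fun y => (e2 y.2, y.2, ((y.1, y.2), (0 : Fin 1)))) (fun s => s.2.2.1)
        (fun a => rfl)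
    have G1 : ent p (fun z => ((z.2.1, z.2.2.1), (z.2.2.2.2, z.1))) = ent src id := by
      rw [hent]
      exact ent_comp_left_inv src id
        (fun y => ((y.1, y.2), (e2 y.2, (0 : Fin 1)))) (fun s => s.1) (fun a => rfl)
    have G2 : ent p (fun z => (z.2.2.2.2, z.1)) = ent src Prod.snd := by
      rw [hent]
      exact ent_comp_left_inv src Prod.snd
        (fun u => (e2 u, (0 : Fin 1))) (fun s => e2.symm s.1) (fun a => by simp)
    have G3 : ent p (fun z => ((z.2.1, z.2.2.1), (z.2.2.2.1, z.1))) = ent src id := by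
      rw [hent]
      exact ent_comp_left_inv src id
        (fun y => ((y.1, y.2), (e1 y.1, (0 : Fin 1)))) (fun s => s.1) (fun a => rfl)
    have G4 : ent p (fun z => (z.2.2.2.1, z.1)) = ent src Prod.fst := by
      rw [hent]
      exact ent_comp_left_inv src Prod.fst
        (fun u => (e1 u, (0 : Fin 1))) (fun s => e1.symm s.1) (fun a => by simp)
    have H1 : ent p (fun z => (z.2.1, z.2.2.1)) = ent src id := by
      rw [hent]
      exact ent_comp_left_inv src id (fun y => (y.1, y.2)) (fun s => s) (fun a => rfl)
    have H2 : ent p (fun z => ((z.2.1, z.2.2.1), (z.2.2.2.1, z.2.2.2.2, z.1)))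
        = ent src id := by
      rw [hent]
      exact ent_comp_left_inv src id
        (fun y => ((y.1, y.2), (e1 y.1, e2 y.2, (0 : Fin 1)))) (fun s => s.1)
        (fun a => rfl)
    have H3 : ent p (fun z => (z.2.2.2.1, z.2.2.2.2, z.1)) = ent src id := by
      rw [hent]
      exact ent_comp_left_inv src id
        (fun y => (e1 y.1, e2 y.2, (0 : Fin 1)))
        (fun s => (e1.symm s.1, e2.symm s.2.1)) (fun a => by simp)
    have hid : ent src (fun ω : Y1 × Y2 => (Prod.fst ω, Prod.snd ω)) = ent src id := rfl
    have hsw : ent src (fun ω : Y1 × Y2 => (Prod.snd ω, Prod.fst ω)) = ent src id :=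
      ent_comp_left_inv src id (fun t => (t.2, t.1)) (fun t => (t.2, t.1))
        (fun a => rfl)
    refine ⟨Fintype.card Y1, Fintype.card Y2, 1, fun _ => 1,
      fun _ y u => if u = e1 y then 1 else 0,
      fun _ y u => if u = e2 y then 1 else 0,
      fun _ => zero_le_one, by simp,
      ⟨fun q y u => by positivity, fun q y => by simp⟩,
      ⟨fun q y u => by positivity, fun q y => by simp⟩, ?_, ?_, ?_, ?_⟩
    · rw [← hp, ge_iff_le]
      unfold condMutInfo condEnt
      rw [E1, E2, E3, E4, G1, G2]
      unfold condEnt at hr1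
      rw [hid] at hr1
      linarith
    · rw [← hp, ge_iff_le]
      unfold condMutInfo condEnt
      rw [F1, F2, F3, E4, G3, G4]
      unfold condEnt at hr2
      rw [hsw] at hr2
      linarith
    · rw [← hp, ge_iff_le]
      unfold condMutInfo
      rw [E2, E1, E3', E4, F2, F1, F3', H1]
      linarith
    · rw [← hp, ge_iff_le]
      unfold condEnt
      rw [H2, H3]
      linarith

end
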